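/- arXiv:1512.01008 — 7 statements merged into one kernel-verified Lean document; each statement's English description precedes it below -/
import Mathlib

section
/- For all n \ge 0, the numbers S_n satisfy the four-term recurrence 9(n+1)^2 S_n - (19n^2+74n+87)S_{n+1} + (n+3)(11n+29)S_{n+2} - (n+3)^2 S_{n+3} = 0. -/
def S (n : ℕ) : ℕ :=
  ∑ k ∈ Finset.range (n + 1),
    (Nat.choose n k) ^ 2 * (Nat.choose (2 * k) k) * (2 * k + 1)

/-- The integer summand. -/
def Fz (n k : ℕ) : ℤ := (Nat.choose n k : ℤ) ^ 2 * (Nat.choose (2 * k) k : ℤ) * (2 * k + 1)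

/-- The certificate polynomial. -/
def Pc (n k : ℤ) : ℤ :=
  (-60 - 164*n - 156*n^2 - 60*n^3 - 8*n^4)
  + (-33 - 100*n - 109*n^2 - 50*n^3 - 8*n^4)*k
  + (144 + 386*n + 356*n^2 + 130*n^3 + 16*n^4)*k^2
  + (-57 - 134*n - 97*n^2 - 20*n^3)*k^3
  + (6 + 12*n + 6*n^2)*k^4

/-- The telescoping certificate. -/
def Hz (n k : ℕ) : ℤ :=
  (Nat.choose (n + 3) k : ℤ) ^ 2 * (Nat.choose (2 * k) k : ℤ) * (k : ℤ) ^ 3 * Pc (n : ℤ) (k : ℤ)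

lemma lemA (m k : ℕ) :
    (Nat.choose m k : ℤ) * ((m : ℤ) + 1) = (Nat.choose (m + 1) k : ℤ) * ((m : ℤ) + 1 - k) := by
  rcases le_or_gt k (m + 1) with h | h
  · have := Nat.choose_mul_succ_eq m k
    have hc : ((m + 1 - k : ℕ) : ℤ) = (m : ℤ) + 1 - k := by
      push_cast [Nat.cast_sub h]; ring
    calc (Nat.choose m k : ℤ) * ((m : ℤ) + 1)
        = ((Nat.choose m k * (m + 1) : ℕ) : ℤ) := by push_cast; ring
      _ = ((Nat.choose (m + 1) k * (m + 1 - k) : ℕ) : ℤ) := by rw [this]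
      _ = (Nat.choose (m + 1) k : ℤ) * ((m : ℤ) + 1 - k) := by push_cast [hc]; ring
  · rw [Nat.choose_eq_zero_of_lt (by omega), Nat.choose_eq_zero_of_lt (by omega)]
    simp

lemma lemC (m k : ℕ) :
    (Nat.choose m (k + 1) : ℤ) * ((k : ℤ) + 1) = (Nat.choose m k : ℤ) * ((m : ℤ) - k) := by
  rcases le_or_gt k m with h | h
  · have := Nat.choose_succ_right_eq m k
    have hc : ((m - k : ℕ) : ℤ) = (m : ℤ) - k := by push_cast [Nat.cast_sub h]; ring
    calc (Nat.choose m (k + 1) : ℤ) * ((k : ℤ) + 1)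
        = ((Nat.choose m (k + 1) * (k + 1) : ℕ) : ℤ) := by push_cast; ring
      _ = ((Nat.choose m k * (m - k) : ℕ) : ℤ) := by rw [this]
      _ = (Nat.choose m k : ℤ) * ((m : ℤ) - k) := by push_cast [hc]; ring
  · rw [Nat.choose_eq_zero_of_lt (by omega), Nat.choose_eq_zero_of_lt (by omega)]
    simp

lemma lemB (k : ℕ) :
    (Nat.choose (2 * (k + 1)) (k + 1) : ℤ) * ((k : ℤ) + 1)
      = 2 * (2 * (k : ℤ) + 1) * (Nat.choose (2 * k) k : ℤ) := by
  have h1 : (2 * k + 1) * Nat.choose (2 * k) k = Nat.choose (2 * k + 1) (k + 1) * (k + 1) :=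
    Nat.add_one_mul_choose_eq (2 * k) k
  have h2 : Nat.choose (2 * k + 1) k = Nat.choose (2 * k + 1) (k + 1) := by
    have := Nat.choose_symm (n := 2 * k + 1) (k := k + 1) (by omega)
    simpa [show 2 * k + 1 - (k + 1) = k by omega] using this
  have h3 : Nat.choose (2 * (k + 1)) (k + 1)
      = Nat.choose (2 * k + 1) k + Nat.choose (2 * k + 1) (k + 1) := by
    have := Nat.choose_succ_succ (2 * k + 1) k
    simpa [show 2 * (k + 1) = 2 * k + 1 + 1 by omega] using this
  have hnat : Nat.choose (2 * (k + 1)) (k + 1) * (k + 1)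
      = 2 * (2 * k + 1) * Nat.choose (2 * k) k := by
    rw [h3, h2]
    calc (Nat.choose (2 * k + 1) (k + 1) + Nat.choose (2 * k + 1) (k + 1)) * (k + 1)
        = 2 * (Nat.choose (2 * k + 1) (k + 1) * (k + 1)) := by ring
      _ = 2 * ((2 * k + 1) * Nat.choose (2 * k) k) := by rw [← h1]
      _ = 2 * (2 * k + 1) * Nat.choose (2 * k) k := by ring
  calc (Nat.choose (2 * (k + 1)) (k + 1) : ℤ) * ((k : ℤ) + 1)
      = ((Nat.choose (2 * (k + 1)) (k + 1) * (k + 1) : ℕ) : ℤ) := by push_cast; ring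
    _ = ((2 * (2 * k + 1) * Nat.choose (2 * k) k : ℕ) : ℤ) := by rw [hnat]
    _ = 2 * (2 * (k : ℤ) + 1) * (Nat.choose (2 * k) k : ℤ) := by push_cast; ring

lemma key (n k : ℕ) :
    (9 * ((n : ℤ) + 1) ^ 4 * ((n : ℤ) + 2) ^ 2 * ((n : ℤ) + 3) ^ 2) * Fz n k
      - ((19 * (n : ℤ) ^ 2 + 74 * n + 87) * ((n : ℤ) + 1) ^ 2 * ((n : ℤ) + 2) ^ 2 * ((n : ℤ) + 3) ^ 2) * Fz (n + 1) k
      + (((n : ℤ) + 3) * (11 * (n : ℤ) + 29) * ((n : ℤ) + 1) ^ 2 * ((n : ℤ) + 2) ^ 2 * ((n : ℤ) + 3) ^ 2) * Fz (n + 2) k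
      - (((n : ℤ) + 3) ^ 2 * ((n : ℤ) + 1) ^ 2 * ((n : ℤ) + 2) ^ 2 * ((n : ℤ) + 3) ^ 2) * Fz (n + 3) k
      = Hz n (k + 1) - Hz n k := by
  have r1 := lemA n k
  have r2 := lemA (n + 1) k
  have r3 := lemA (n + 2) k
  have r4 := lemC (n + 3) k
  have r5 := lemB k
  simp only [show n + 1 + 1 = n + 2 from rfl, show n + 2 + 1 = n + 3 from rfl] at r2 r3
  push_cast at r1 r2 r3 r4 r5 ⊢
  simp only [Fz, Hz, Pc]
  push_cast
  set A0 : ℤ := (Nat.choose n k : ℤ)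
  set A1 : ℤ := (Nat.choose (n + 1) k : ℤ)
  set A2 : ℤ := (Nat.choose (n + 2) k : ℤ)
  set x : ℤ := (Nat.choose (n + 3) k : ℤ)
  set x' : ℤ := (Nat.choose (n + 3) (k + 1) : ℤ)
  set b : ℤ := (Nat.choose (2 * k) k : ℤ)
  set b' : ℤ := (Nat.choose (2 * (k + 1)) (k + 1) : ℤ)
  have e0 : A0 * (((n : ℤ) + 1) * ((n : ℤ) + 2) * ((n : ℤ) + 3))
      = x * (((n : ℤ) + 1 - k) * ((n : ℤ) + 2 - k) * ((n : ℤ) + 3 - k)) := by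
    linear_combination (((n : ℤ) + 2) * ((n : ℤ) + 3)) * r1
      + (((n : ℤ) + 1 - k) * ((n : ℤ) + 3)) * r2
      + (((n : ℤ) + 1 - k) * ((n : ℤ) + 2 - k)) * r3
  have e1 : A1 * (((n : ℤ) + 2) * ((n : ℤ) + 3))
      = x * (((n : ℤ) + 2 - k) * ((n : ℤ) + 3 - k)) := by
    linear_combination ((n : ℤ) + 3) * r2 + ((n : ℤ) + 2 - k) * r3
  have s0 : A0 ^ 2 * (((n : ℤ) + 1) * ((n : ℤ) + 2) * ((n : ℤ) + 3)) ^ 2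
      = x ^ 2 * (((n : ℤ) + 1 - k) * ((n : ℤ) + 2 - k) * ((n : ℤ) + 3 - k)) ^ 2 := by
    linear_combination (A0 * (((n : ℤ) + 1) * ((n : ℤ) + 2) * ((n : ℤ) + 3))
      + x * (((n : ℤ) + 1 - k) * ((n : ℤ) + 2 - k) * ((n : ℤ) + 3 - k))) * e0
  have s1 : A1 ^ 2 * (((n : ℤ) + 2) * ((n : ℤ) + 3)) ^ 2
      = x ^ 2 * (((n : ℤ) + 2 - k) * ((n : ℤ) + 3 - k)) ^ 2 := by
    linear_combination (A1 * (((n : ℤ) + 2) * ((n : ℤ) + 3))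
      + x * (((n : ℤ) + 2 - k) * ((n : ℤ) + 3 - k))) * e1
  have s2 : A2 ^ 2 * ((n : ℤ) + 3) ^ 2 = x ^ 2 * ((n : ℤ) + 3 - k) ^ 2 := by
    linear_combination (A2 * ((n : ℤ) + 3) + x * ((n : ℤ) + 3 - k)) * r3
  have s4 : x' ^ 2 * ((k : ℤ) + 1) ^ 2 = x ^ 2 * ((n : ℤ) + 3 - k) ^ 2 := by
    linear_combination (x' * ((k : ℤ) + 1) + x * ((n : ℤ) + 3 - k)) * r4
  have t4 : x' ^ 2 * b' * ((k : ℤ) + 1) ^ 3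
      = 2 * (2 * (k : ℤ) + 1) * b * x ^ 2 * ((n : ℤ) + 3 - k) ^ 2 := by
    linear_combination (((k : ℤ) + 1) * b') * s4 + (x ^ 2 * ((n : ℤ) + 3 - k) ^ 2) * r5
  linear_combination (9 * ((n : ℤ) + 1) ^ 2 * b * (2 * k + 1)) * s0
    - ((19 * (n : ℤ) ^ 2 + 74 * n + 87) * ((n : ℤ) + 1) ^ 2 * b * (2 * k + 1)) * s1
    + (((n : ℤ) + 3) * (11 * (n : ℤ) + 29) * ((n : ℤ) + 1) ^ 2 * ((n : ℤ) + 2) ^ 2 * b * (2 * k + 1)) * s2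
    - ((-60 - 164*(n:ℤ) - 156*(n:ℤ)^2 - 60*(n:ℤ)^3 - 8*(n:ℤ)^4)
      + (-33 - 100*(n:ℤ) - 109*(n:ℤ)^2 - 50*(n:ℤ)^3 - 8*(n:ℤ)^4)*((k:ℤ)+1)
      + (144 + 386*(n:ℤ) + 356*(n:ℤ)^2 + 130*(n:ℤ)^3 + 16*(n:ℤ)^4)*((k:ℤ)+1)^2
      + (-57 - 134*(n:ℤ) - 97*(n:ℤ)^2 - 20*(n:ℤ)^3)*((k:ℤ)+1)^3
      + (6 + 12*(n:ℤ) + 6*(n:ℤ)^2)*((k:ℤ)+1)^4) * t4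

lemma sum_S (m j : ℕ) : (S m : ℤ) = ∑ k ∈ Finset.range (m + 1 + j), Fz m k := by
  have h1 : (S m : ℤ) = ∑ k ∈ Finset.range (m + 1), Fz m k := by
    simp only [S, Fz]; push_cast; rfl
  rw [h1]
  apply Finset.sum_subset
  · exact Finset.range_subset_range.mpr (by omega)
  · intro k hk hk2
    simp only [Finset.mem_range] at hk hk2
    have : m < k := by omega
    simp [Fz, Nat.choose_eq_zero_of_lt this]

theorem stmt_2 : ∀ n : ℕ,
    9 * ((n : ℤ) + 1) ^ 2 * (S n : ℤ)
      - (19 * (n : ℤ) ^ 2 + 74 * (n : ℤ) + 87) * (S (n + 1) : ℤ)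
      + ((n : ℤ) + 3) * (11 * (n : ℤ) + 29) * (S (n + 2) : ℤ)
      - ((n : ℤ) + 3) ^ 2 * (S (n + 3) : ℤ) = 0 := by
  intro n
  have h0 : (S n : ℤ) = ∑ k ∈ Finset.range (n + 4), Fz n k := by
    simpa [show n + 1 + 3 = n + 4 from rfl] using sum_S n 3
  have h1 : (S (n + 1) : ℤ) = ∑ k ∈ Finset.range (n + 4), Fz (n + 1) k := by
    simpa [show n + 1 + 1 + 2 = n + 4 from rfl] using sum_S (n + 1) 2
  have h2 : (S (n + 2) : ℤ) = ∑ k ∈ Finset.range (n + 4), Fz (n + 2) k := by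
    simpa [show n + 2 + 1 + 1 = n + 4 from rfl] using sum_S (n + 2) 1
  have h3 : (S (n + 3) : ℤ) = ∑ k ∈ Finset.range (n + 4), Fz (n + 3) k := by
    simpa [show n + 3 + 1 + 0 = n + 4 from rfl] using sum_S (n + 3) 0
  have tele : ∑ k ∈ Finset.range (n + 4), (Hz n (k + 1) - Hz n k) = 0 := by
    rw [Finset.sum_range_sub (fun k => Hz n k)]
    have e1 : Hz n (n + 4) = 0 := by
      simp [Hz, Nat.choose_eq_zero_of_lt (show n + 3 < n + 4 by omega)]
    have e2 : Hz n 0 = 0 := by simp [Hz]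
    rw [e1, e2, sub_zero]
  have main : ∑ k ∈ Finset.range (n + 4),
      ((9 * ((n : ℤ) + 1) ^ 4 * ((n : ℤ) + 2) ^ 2 * ((n : ℤ) + 3) ^ 2) * Fz n k
      - ((19 * (n : ℤ) ^ 2 + 74 * n + 87) * ((n : ℤ) + 1) ^ 2 * ((n : ℤ) + 2) ^ 2 * ((n : ℤ) + 3) ^ 2) * Fz (n + 1) k
      + (((n : ℤ) + 3) * (11 * (n : ℤ) + 29) * ((n : ℤ) + 1) ^ 2 * ((n : ℤ) + 2) ^ 2 * ((n : ℤ) + 3) ^ 2) * Fz (n + 2) k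
      - (((n : ℤ) + 3) ^ 2 * ((n : ℤ) + 1) ^ 2 * ((n : ℤ) + 2) ^ 2 * ((n : ℤ) + 3) ^ 2) * Fz (n + 3) k)
      = 0 := by
    rw [Finset.sum_congr rfl (fun k _ => key n k)]
    exact tele
  simp only [Finset.sum_sub_distrib, Finset.sum_add_distrib, ← Finset.mul_sum] at main
  have hC : (((n : ℤ) + 1) ^ 2 * ((n : ℤ) + 2) ^ 2 * ((n : ℤ) + 3) ^ 2) ≠ 0 := by positivity
  rw [h0, h1, h2, h3]
  apply mul_left_cancel₀ hC
  rw [mul_zero]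
  linear_combination main
end

section
/- For every integer n \ge 1, R_n > 0, where R_n = \sum_{k=0}^n \binom{n}{k}\binom{n+k}{k}\frac{1}{2k-1}. -/
noncomputable def R (n : ℕ) : ℚ :=
  ∑ k ∈ Finset.range (n + 1),
    (Nat.choose n k : ℚ) * (Nat.choose (n + k) k : ℚ) * (1 / (2 * (k : ℚ) - 1))

theorem stmt_3 : ∀ n : ℕ, 1 ≤ n → 0 < R n := by
  intro n hn
  obtain ⟨m, rfl⟩ : ∃ m, n = m + 1 := ⟨n - 1, by omega⟩
  unfold R
  rw [Finset.sum_range_succ', Finset.sum_range_succ']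
  have hS : 0 ≤ ∑ i ∈ Finset.range m,
      (Nat.choose (m + 1) (i + 1 + 1) : ℚ) * (Nat.choose (m + 1 + (i + 1 + 1)) (i + 1 + 1) : ℚ) *
        (1 / (2 * ((i + 1 + 1 : ℕ) : ℚ) - 1)) := by
    apply Finset.sum_nonneg
    intro i _
    apply mul_nonneg (mul_nonneg (by positivity) (by positivity))
    apply one_div_nonneg.mpr
    have : (0:ℚ) ≤ (i:ℚ) := by positivity
    push_cast
    linarith
  have h1 : (Nat.choose (m + 1) (0 + 1) : ℚ) * (Nat.choose (m + 1 + (0 + 1)) (0 + 1) : ℚ) *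
      (1 / (2 * ((0 + 1 : ℕ) : ℚ) - 1)) = ((m:ℚ) + 1) * ((m:ℚ) + 2) := by
    simp [Nat.choose_one_right]
    ring
  have h0 : (Nat.choose (m + 1) 0 : ℚ) * (Nat.choose (m + 1 + 0) 0 : ℚ) *
      (1 / (2 * ((0 : ℕ) : ℚ) - 1)) = -1 := by norm_num
  rw [h1, h0]
  have hm : (0:ℚ) ≤ (m:ℚ) := by positivity
  nlinarith [hS]
end

section
/- For all integers n \ge 3, b_n < R_{n+1}/R_n < b_{n+1}, where b_n = (3 - 9/(2n)) + \sqrt{2}(2 - 3/n). -/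
noncomputable def b (n : ℕ) : ℝ :=
  (3 - 9 / (2 * (n : ℝ))) + Real.sqrt 2 * (2 - 3 / (n : ℝ))



lemma row (m k : ℕ) : ((m:ℚ) + 1 - (k:ℚ)) * ((m+1).choose k : ℚ)
    = ((m:ℚ) + 1) * (m.choose k : ℚ) := by
  rcases le_or_gt k (m+1) with h | h
  · have h0 := Nat.choose_mul_succ_eq m k
    have h2 := congrArg (fun x : ℕ => (x : ℚ)) h0
    simp only [Nat.cast_mul] at h2
    rw [Nat.cast_sub h] at h2
    push_cast at h2
    linear_combination -h2
  · rw [Nat.choose_eq_zero_of_lt h, Nat.choose_eq_zero_of_lt (by omega : m < k)]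
    push_cast; ring

lemma col (m j : ℕ) : ((j:ℚ) + 1) * (m.choose (j+1) : ℚ)
    = ((m:ℚ) - (j:ℚ)) * (m.choose j : ℚ) := by
  rcases le_or_gt j m with h | h
  · have h0 := Nat.choose_succ_right_eq m j
    have h2 := congrArg (fun x : ℕ => (x : ℚ)) h0
    simp only [Nat.cast_mul] at h2
    rw [Nat.cast_sub h] at h2
    push_cast at h2
    linear_combination h2
  · rw [Nat.choose_eq_zero_of_lt h, Nat.choose_eq_zero_of_lt (by omega : m < j+1)]
    push_cast; ring


noncomputable def T (n k : ℕ) : ℚ :=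
  (Nat.choose n k : ℚ) * (Nat.choose (n + k) k : ℚ) * (1 / (2 * (k : ℚ) - 1))

noncomputable def G (n : ℕ) : ℕ → ℚ
  | 0 => 0
  | (j+1) => -4 * ((n+2).choose j : ℚ) * ((n+1+j).choose j : ℚ)

lemma keyid (n j : ℕ) :
    ((n:ℚ)+3) * T (n+3) (j+1) - (7*(n:ℚ)+13) * T (n+2) (j+1) + (7*(n:ℚ)+15) * T (n+1) (j+1)
      - ((n:ℚ)+1) * T n (j+1) = G n (j+2) - G n (j+1) := by
  have hn1 : ((n:ℚ)+1) ≠ 0 := by positivity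
  have hn2 : ((n:ℚ)+2) ≠ 0 := by positivity
  have hn3 : ((n:ℚ)+3) ≠ 0 := by positivity
  have hd : 2*((j:ℚ)+1)-1 ≠ 0 := by
    have : (0:ℚ) ≤ (j:ℚ) := Nat.cast_nonneg j
    intro hc; nlinarith
  have f2 : ((n+2).choose (j+1) : ℚ) = ((n:ℚ)+2-(j:ℚ)) * ((n+3).choose (j+1) : ℚ) / ((n:ℚ)+3) := by
    have h := row (n+2) (j+1)
    simp only [show n+2+1 = n+3 from rfl] at h
    push_cast at h
    rw [eq_div_iff hn3]; linear_combination -h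
  have f1 : ((n+1).choose (j+1) : ℚ) = ((n:ℚ)+1-(j:ℚ)) * ((n+2).choose (j+1) : ℚ) / ((n:ℚ)+2) := by
    have h := row (n+1) (j+1)
    simp only [show n+1+1 = n+2 from rfl] at h
    push_cast at h
    rw [eq_div_iff hn2]; linear_combination -h
  have f0 : (n.choose (j+1) : ℚ) = ((n:ℚ)-(j:ℚ)) * ((n+1).choose (j+1) : ℚ) / ((n:ℚ)+1) := by
    have h := row n (j+1)
    push_cast at h
    rw [eq_div_iff hn1]; linear_combination -h
  have fB1 : ((n+j+2).choose (j+1) : ℚ)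
      = ((n:ℚ)+(j:ℚ)+2) * ((n+j+1).choose (j+1) : ℚ) / ((n:ℚ)+1) := by
    have h := row (n+j+1) (j+1)
    simp only [show n+j+1+1 = n+j+2 from rfl] at h
    push_cast at h
    rw [eq_div_iff hn1]; linear_combination h
  have fB2 : ((n+j+3).choose (j+1) : ℚ)
      = ((n:ℚ)+(j:ℚ)+3) * ((n+j+2).choose (j+1) : ℚ) / ((n:ℚ)+2) := by
    have h := row (n+j+2) (j+1)
    simp only [show n+j+2+1 = n+j+3 from rfl] at h
    push_cast at h
    rw [eq_div_iff hn2]; linear_combination h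
  have fB3 : ((n+j+4).choose (j+1) : ℚ)
      = ((n:ℚ)+(j:ℚ)+4) * ((n+j+3).choose (j+1) : ℚ) / ((n:ℚ)+3) := by
    have h := row (n+j+3) (j+1)
    simp only [show n+j+3+1 = n+j+4 from rfl] at h
    push_cast at h
    rw [eq_div_iff hn3]; linear_combination h
  have fp : ((n+2).choose j : ℚ) = ((n+3).choose (j+1) : ℚ) - ((n+2).choose (j+1) : ℚ) := by
    have h := Nat.choose_succ_succ (n+2) j
    replace h : ((n+3).choose (j+1)) = (n+2).choose j + (n+2).choose (j+1) := h
    have h2 := congrArg (fun x : ℕ => (x : ℚ)) h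
    push_cast at h2
    linarith
  have fq : ((n+j+1).choose j : ℚ) = ((j:ℚ)+1) * ((n+j+1).choose (j+1) : ℚ) / ((n:ℚ)+1) := by
    have h := col (n+j+1) j
    push_cast at h
    rw [eq_div_iff hn1]; linear_combination -h
  simp only [T, G]
  simp only [show n+1+(j+1) = n+j+2 from by omega, show n+2+(j+1) = n+j+3 from by omega,
    show n+3+(j+1) = n+j+4 from by omega, show n+(j+1) = n+j+1 from by omega,
    show n+1+j = n+j+1 from by omega]
  rw [fp, fq, fB3, fB2, fB1, f0, f1, f2]
  push_cast
  field_simp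
  ring


lemma keyid' (n k : ℕ) :
    ((n:ℚ)+3) * T (n+3) k - (7*(n:ℚ)+13) * T (n+2) k + (7*(n:ℚ)+15) * T (n+1) k
      - ((n:ℚ)+1) * T n k = G n (k+1) - G n k := by
  rcases k with _ | j
  · simp [T, G]
    ring
  · exact keyid n j

lemma R_eq (n m : ℕ) (h : n + 1 ≤ m) : R n = ∑ k ∈ Finset.range m, T n k := by
  rw [R]
  apply Finset.sum_subset (Finset.range_subset_range.2 h)
  intro x _ hx
  have hn : n < x := by simp only [Finset.mem_range] at hx ⊢; omega
  simp [T, Nat.choose_eq_zero_of_lt hn]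

lemma Rrec (n : ℕ) : ((n:ℚ)+3) * R (n+3) = (7*(n:ℚ)+13) * R (n+2) - (7*(n:ℚ)+15) * R (n+1)
    + ((n:ℚ)+1) * R n := by
  have h0 := R_eq n (n+4) (by omega)
  have h1 := R_eq (n+1) (n+4) (by omega)
  have h2 := R_eq (n+2) (n+4) (by omega)
  have h3 := R_eq (n+3) (n+4) (by omega)
  have tel : ∑ k ∈ Finset.range (n+4),
      (((n:ℚ)+3) * T (n+3) k - (7*(n:ℚ)+13) * T (n+2) k + (7*(n:ℚ)+15) * T (n+1) k
        - ((n:ℚ)+1) * T n k) = G n (n+4) - G n 0 := by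
    simp only [keyid']
    exact Finset.sum_range_sub (G n) (n+4)
  have hG0 : G n 0 = 0 := rfl
  have hGtop : G n (n+4) = 0 := by
    show -4 * ((n+2).choose (n+3) : ℚ) * ((n+1+(n+3)).choose (n+3) : ℚ) = 0
    rw [Nat.choose_eq_zero_of_lt (by omega)]
    push_cast; ring
  rw [hG0, hGtop] at tel
  simp only [Finset.sum_sub_distrib, Finset.sum_add_distrib, ← Finset.mul_sum] at tel
  rw [h0, h1, h2, h3]
  linarith [tel]


set_option maxHeartbeats 1000000 in


lemma step (N s c x y z w : ℝ) (hN : 6 ≤ N) (hs2 : s^2 = 2) (hs0 : 0 ≤ s)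
    (hc : c = 3 + 2*s)
    (hy : 0 < y) (hz : 0 < z)
    (H1 : (2*N-7)*c*x < (2*N-4)*y) (H2 : (2*N-2)*y < (2*N-5)*c*x)
    (H3 : (2*N-5)*c*y < (2*N-2)*z) (H4 : 2*N*z < (2*N-3)*c*y)
    (hE : (N+1)*w = (7*N-1)*z - (7*N+1)*y + (N-1)*x) :
    (2*N-3)*c*z < 2*N*w ∧ (2*N+2)*w < (2*N-1)*c*z := by
  have hc0 : 0 < c := by rw [hc]; linarith
  have hK1 : 0 < (2*N-7)*((7*N+1)*c) - (N-1)*(2*N-4) := by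
    rw [hc]; nlinarith [sq_nonneg (N-6), mul_nonneg hs0 (sq_nonneg (N-6))]
  have hK2 : 0 < (2*N-5)*((7*N+1)*c) - (N-1)*(2*N-2) := by
    rw [hc]; nlinarith [sq_nonneg (N-6), mul_nonneg hs0 (sq_nonneg (N-6))]
  -- FU
  have hFUeq : (N+1)*(2*N-1)*(2*N-3)*(2*N-7)*(3+2*s)^3
      - (2*N+2)*(7*N-1)*(2*N-3)*(2*N-7)*(3+2*s)^2
      + (2*N+2)*(2*N)*((7*N+1)*((2*N-7)*(3+2*s)))
      - (2*N+2)*(2*N)*((N-1)*(2*N-4))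
      = (360*N^2 - 1005*N - 1365) + (276*N^2 - 690*N - 966)*s := by
    linear_combination ((64*N^4 - 288*N^3 + 144*N^2 + 328*N - 168)*s
      + 64*N^4 - 368*N^3 + 464*N^2 + 308*N - 588) * hs2
  have hFU : 0 < (N+1)*(2*N-1)*(2*N-3)*(2*N-7)*(c*c*c)
      - (2*N+2)*(7*N-1)*(2*N-3)*(2*N-7)*(c*c)
      + (2*N+2)*(2*N)*((7*N+1)*((2*N-7)*c))
      - (2*N+2)*(2*N)*((N-1)*(2*N-4)) := by
    rw [hc]
    have e1 : 0 < 360*N^2 - 1005*N - 1365 := by nlinarith [sq_nonneg (N-6)]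
    have e2 : 0 ≤ (276*N^2 - 690*N - 966)*s := by
      apply mul_nonneg _ hs0; nlinarith [sq_nonneg (N-6)]
    linarith [hFUeq, e1, e2]
  -- FL
  have hFLeq : (2*N)*(2*N-5)*(2*N-5)*(7*N-1)*(3+2*s)^2
      - (2*N)*(2*N-2)*((2*N-5)*((7*N+1)*(3+2*s)))
      + (2*N)*(2*N-2)*((N-1)*(2*N-2))
      - (N+1)*(2*N-3)*(2*N-5)*(2*N-5)*(3+2*s)^3
      = (576*N^2 - 4383*N + 7425) + (396*N^2 - 3090*N + 5250)*s := by
    linear_combination ((-64*N^4 + 352*N^3 - 464*N^2 - 280*N + 600)*s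
      + (-64*N^4 + 432*N^3 - 528*N^2 - 1460*N + 2700)) * hs2
  have hFL : 0 < (2*N)*(2*N-5)*(2*N-5)*(7*N-1)*(c*c)
      - (2*N)*(2*N-2)*((2*N-5)*((7*N+1)*c))
      + (2*N)*(2*N-2)*((N-1)*(2*N-2))
      - (N+1)*(2*N-3)*(2*N-5)*(2*N-5)*(c*c*c) := by
    rw [hc]
    have e1 : 0 < 576*N^2 - 4383*N + 7425 := by nlinarith [sq_nonneg (N-6)]
    have e2 : 0 ≤ (396*N^2 - 3090*N + 5250)*s := by
      apply mul_nonneg _ hs0; nlinarith [sq_nonneg (N-6)]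
    linarith [hFLeq, e1, e2]
  constructor
  · -- lower bound: (2N-3) c z < 2N w
    have l4 : ((2*N)*((2*N-5)*((2*N-5)*(c*c)))) * ((N+1)*w)
        = ((2*N)*((2*N-5)*((2*N-5)*(c*c)))) * ((7*N-1)*z - (7*N+1)*y + (N-1)*x) := by
      rw [hE]
    have hm1 : 0 < (N-1)*((2*N)*((2*N-5)*c)) := by
      apply mul_pos (by linarith)
      apply mul_pos (by linarith)
      exact mul_pos (by linarith) hc0
    have l1 := mul_lt_mul_of_pos_left H2 hm1
    have hm2 : 0 < (2*N)*((2*N-5)*((7*N+1)*c) - (N-1)*(2*N-2)) :=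
      mul_pos (by linarith) hK2
    have l2 := mul_lt_mul_of_pos_left H3 hm2
    have l3 := mul_pos hFL hz
    have goal' : ((N+1)*((2*N-5)*((2*N-5)*(c*c)))) * ((2*N-3)*c*z)
        < ((N+1)*((2*N-5)*((2*N-5)*(c*c)))) * (2*N*w) := by
      linarith [l1, l2, l3, l4]
    have hM : 0 < (N+1)*((2*N-5)*((2*N-5)*(c*c))) := by
      apply mul_pos (by linarith)
      apply mul_pos (by linarith)
      exact mul_pos (by linarith) (mul_pos hc0 hc0)
    exact lt_of_mul_lt_mul_left goal' (le_of_lt hM)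
  · -- upper bound: (2N+2) w < (2N-1) c z
    have u4 : ((2*N+2)*((2*N-3)*((2*N-7)*(c*c)))) * ((N+1)*w)
        = ((2*N+2)*((2*N-3)*((2*N-7)*(c*c)))) * ((7*N-1)*z - (7*N+1)*y + (N-1)*x) := by
      rw [hE]
    have hm1 : 0 < (N-1)*((2*N+2)*((2*N-3)*c)) := by
      apply mul_pos (by linarith)
      apply mul_pos (by linarith)
      exact mul_pos (by linarith) hc0
    have u1 := mul_lt_mul_of_pos_left H1 hm1
    have hm2 : 0 < (2*N+2)*((2*N-7)*((7*N+1)*c) - (N-1)*(2*N-4)) :=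
      mul_pos (by linarith) hK1
    have u2 := mul_lt_mul_of_pos_left H4 hm2
    have u3 := mul_pos hFU hz
    have goal' : ((N+1)*((2*N-3)*((2*N-7)*(c*c)))) * ((2*N+2)*w)
        < ((N+1)*((2*N-3)*((2*N-7)*(c*c)))) * ((2*N-1)*c*z) := by
      linarith [u1, u2, u3, u4]
    exact lt_of_mul_lt_mul_left goal' (le_of_lt (by
      apply mul_pos (by linarith)
      apply mul_pos (by linarith)
      exact mul_pos (by linarith) (mul_pos hc0 hc0)))


lemma b_mul (k : ℕ) (hk : k ≠ 0) :
    (2*(k:ℝ)) * b k = (2*(k:ℝ)-3) * (3 + 2*Real.sqrt 2) := by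
  have h : (k:ℝ) ≠ 0 := Nat.cast_ne_zero.mpr hk
  rw [b]
  field_simp
  ring

def Q (n : ℕ) : Prop := 0 < R n ∧ 0 < R (n+1) ∧
  b n * ((R n : ℚ) : ℝ) < ((R (n+1) : ℚ) : ℝ) ∧
  ((R (n+1) : ℚ) : ℝ) < b (n+1) * ((R n : ℚ) : ℝ)

lemma sqrt2_facts : (Real.sqrt 2)^2 = 2 ∧ 0 ≤ Real.sqrt 2 ∧
    1.41 < Real.sqrt 2 ∧ Real.sqrt 2 < 1.42 := by
  have h2 : (Real.sqrt 2)^2 = 2 := Real.sq_sqrt (by norm_num)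
  have h0 : 0 ≤ Real.sqrt 2 := Real.sqrt_nonneg 2
  refine ⟨h2, h0, ?_, ?_⟩ <;> nlinarith

set_option maxHeartbeats 2000000 in
lemma Qall : ∀ n : ℕ, 3 ≤ n → Q n := by
  intro n
  induction n using Nat.strong_induction_on with
  | _ n IH =>
  intro hn
  obtain ⟨hs2, hs0, hlb, hub⟩ := sqrt2_facts
  rcases Nat.lt_or_ge n 6 with h6 | h6
  · have hR3 : R 3 = 25 := by norm_num [R, Finset.sum_range_succ, Nat.choose]
    have hR4 : R 4 = 87 := by norm_num [R, Finset.sum_range_succ, Nat.choose]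
    have hR5 : R 5 = 329 := by norm_num [R, Finset.sum_range_succ, Nat.choose]
    have hR6 : R 6 = 1359 := by norm_num [R, Finset.sum_range_succ, Nat.choose]
    interval_cases n
    · refine ⟨by rw [hR3]; norm_num, by rw [hR4]; norm_num, ?_, ?_⟩ <;>
        · rw [hR3, hR4]; norm_num [b]; nlinarith
    · refine ⟨by rw [hR4]; norm_num, by rw [hR5]; norm_num, ?_, ?_⟩ <;>
        · rw [hR4, hR5]; norm_num [b]; nlinarith
    · refine ⟨by rw [hR5]; norm_num, by rw [hR6]; norm_num, ?_, ?_⟩ <;>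
        · rw [hR5, hR6]; norm_num [b]; nlinarith
  · obtain ⟨m, rfl⟩ : ∃ m, n = m + 6 := ⟨n - 6, by omega⟩
    obtain ⟨hx, hy, hB1, hB2⟩ := IH (m+4) (by omega) (by omega)
    obtain ⟨-, hz, hB3, hB4⟩ := IH (m+5) (by omega) (by omega)
    set s := Real.sqrt 2 with hsdef
    set c : ℝ := 3 + 2*s with hc
    have hc0 : (0:ℝ) < c := by rw [hc]; linarith
    set M : ℝ := (m : ℝ) with hM
    have hM0 : 0 ≤ M := Nat.cast_nonneg m
    -- real casts of R values
    set x : ℝ := ((R (m+4) : ℚ) : ℝ) with hxd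
    set y : ℝ := ((R (m+5) : ℚ) : ℝ) with hyd
    set z : ℝ := ((R (m+6) : ℚ) : ℝ) with hzd
    set w : ℝ := ((R (m+7) : ℚ) : ℝ) with hwd
    have hxR : (0:ℝ) < x := by rw [hxd]; exact_mod_cast hx
    have hyR : (0:ℝ) < y := by rw [hyd]; exact_mod_cast hy
    have hzR : (0:ℝ) < z := by rw [hzd]; exact_mod_cast hz
    -- b identities
    have hb4 := b_mul (m+4) (by omega)
    have hb5 := b_mul (m+5) (by omega)
    have hb6 := b_mul (m+6) (by omega)
    have hb7 := b_mul (m+7) (by omega)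
    push_cast at hb4 hb5 hb6 hb7
    -- recurrence, cast to ℝ
    have hrec := Rrec (m+4)
    have hrecR := congrArg (fun q : ℚ => (q : ℝ)) hrec
    push_cast at hrecR
    have hE : ((M+6)+1)*w = (7*(M+6)-1)*z - (7*(M+6)+1)*y + ((M+6)-1)*x := by
      rw [hxd, hyd, hzd, hwd, hM]
      push_cast
      linarith [hrecR]
    -- hypotheses H1..H4
    have H1 : (2*(M+6)-7)*c*x < (2*(M+6)-4)*y := by
      have h := mul_lt_mul_of_pos_left hB1 (show (0:ℝ) < 2*((m:ℝ)+4) by push_cast; linarith)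
      calc (2*(M+6)-7)*c*x = (2*((m:ℝ)+4) * b (m+4)) * x := by
            rw [hb4]; all_goals (push_cast [hM]; try ring)
        _ = 2*((m:ℝ)+4) * (b (m+4) * x) := by ring
        _ < 2*((m:ℝ)+4) * y := h
        _ = (2*(M+6)-4)*y := by rw [hM]; all_goals ring
    have H2 : (2*(M+6)-2)*y < (2*(M+6)-5)*c*x := by
      have h := mul_lt_mul_of_pos_left hB2 (show (0:ℝ) < 2*((m:ℝ)+5) by push_cast; linarith)
      calc (2*(M+6)-2)*y = 2*((m:ℝ)+5) * y := by rw [hM]; all_goals ring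
        _ < 2*((m:ℝ)+5) * (b (m+5) * x) := h
        _ = (2*((m:ℝ)+5) * b (m+5)) * x := by ring
        _ = (2*(M+6)-5)*c*x := by rw [hb5]; all_goals (push_cast [hM]; try ring)
    have H3 : (2*(M+6)-5)*c*y < (2*(M+6)-2)*z := by
      have h := mul_lt_mul_of_pos_left hB3 (show (0:ℝ) < 2*((m:ℝ)+5) by push_cast; linarith)
      calc (2*(M+6)-5)*c*y = (2*((m:ℝ)+5) * b (m+5)) * y := by
            rw [hb5]; all_goals (push_cast [hM]; try ring)
        _ = 2*((m:ℝ)+5) * (b (m+5) * y) := by ring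
        _ < 2*((m:ℝ)+5) * z := h
        _ = (2*(M+6)-2)*z := by rw [hM]; all_goals ring
    have H4 : 2*(M+6)*z < (2*(M+6)-3)*c*y := by
      have h := mul_lt_mul_of_pos_left hB4 (show (0:ℝ) < 2*((m:ℝ)+6) by push_cast; linarith)
      calc 2*(M+6)*z = 2*((m:ℝ)+6) * z := by rw [hM]; all_goals ring
        _ < 2*((m:ℝ)+6) * (b (m+6) * y) := h
        _ = (2*((m:ℝ)+6) * b (m+6)) * y := by ring
        _ = (2*(M+6)-3)*c*y := by rw [hb6]; all_goals (push_cast [hM]; try ring)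
    clear hrec hrecR IH hB1 hB2 hB3 hB4 hb4 hb5
    obtain ⟨SL, SU⟩ := step (M+6) s c x y z w (by linarith) hs2 hs0 hc hyR hzR H1 H2 H3 H4 hE
    -- SL : (2(M+6)-3) c z < 2(M+6) w ;  SU : (2(M+6)+2) w < (2(M+6)-1) c z
    have hwR : (0:ℝ) < w := by
      have h1 : 0 < (2*(M+6)-3)*c*z := by
        apply mul_pos (mul_pos (by linarith) hc0) hzR
      have hw2 : 0 < 2*(M+6)*w := lt_trans h1 SL
      nlinarith [hw2, hM0]
    have hw : 0 < R (m+7) := by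
      have : (0:ℝ) < ((R (m+7) : ℚ) : ℝ) := hwR
      exact_mod_cast this
    refine ⟨hz, hw, ?_, ?_⟩
    · -- b (m+6) * z < w
      have e : 2*((m:ℝ)+6) * (b (m+6) * z) = (2*(M+6)-3)*c*z := by
        rw [← mul_assoc, hb6]; all_goals (push_cast [hM]; try ring)
      have h2 : 2*((m:ℝ)+6) * (b (m+6) * z) < 2*((m:ℝ)+6) * w := by
        rw [e]
        calc (2*(M+6)-3)*c*z < 2*(M+6)*w := SL
          _ = 2*((m:ℝ)+6)*w := by rw [hM]
      exact lt_of_mul_lt_mul_left h2 (by push_cast; linarith)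
    · -- w < b (m+7) * z
      have e : 2*((m:ℝ)+7) * (b (m+7) * z) = (2*(M+6)-1)*c*z := by
        rw [← mul_assoc, hb7]; all_goals (push_cast [hM]; try ring)
      have h2 : 2*((m:ℝ)+7) * w < 2*((m:ℝ)+7) * (b (m+7) * z) := by
        rw [e]
        calc 2*((m:ℝ)+7)*w = (2*(M+6)+2)*w := by rw [hM]; all_goals ring
          _ < (2*(M+6)-1)*c*z := SU
      exact lt_of_mul_lt_mul_left h2 (by push_cast; linarith)

theorem stmt_4 : ∀ n : ℕ, 3 ≤ n →
    b n < ((R (n + 1) : ℝ) / (R n : ℝ)) ∧ ((R (n + 1) : ℝ) / (R n : ℝ)) < b (n + 1) := by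
  intro n hn
  obtain ⟨h0, h1, hl, hu⟩ := Qall n hn
  have h0R : (0:ℝ) < ((R n : ℚ) : ℝ) := by exact_mod_cast h0
  constructor
  · rw [lt_div_iff₀ h0R]; exact hl
  · rw [div_lt_iff₀ h0R]; exact hu
end

section
/- For all integers k \ge 3, with b_n = (3 - 9/(2n)) + \sqrt{2}(2 - 3/n), one has (7k+13)b_k b_{k+1} b_{k+2} - (7k+15)b_k b_{k+1} + (k+1)b_{k+2} - (k+3)b_k b_{k+1} b_{k+2} b_{k+3} < 0. -/
theorem stmt_8 : ∀ k : ℕ, 3 ≤ k →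
    (7 * (k : ℝ) + 13) * b k * b (k + 1) * b (k + 2)
      - (7 * (k : ℝ) + 15) * b k * b (k + 1)
      + ((k : ℝ) + 1) * b (k + 2)
      - ((k : ℝ) + 3) * b k * b (k + 1) * b (k + 2) * b (k + 3) < 0 := by
  intro k hk
  have hn : (3 : ℝ) ≤ (k : ℝ) := by exact_mod_cast hk
  set n : ℝ := (k : ℝ) with hndef
  set s : ℝ := Real.sqrt 2 with hs
  have hs2 : s ^ 2 = 2 := Real.sq_sqrt (by norm_num)
  have hs0 : 0 ≤ s := Real.sqrt_nonneg 2
  have hs1 : 1 < s := by nlinarith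
  have hs1' : s < 2 := by nlinarith
  have h0 : (0:ℝ) < n := by linarith
  have h1 : (0:ℝ) < n + 1 := by linarith
  have h2 : (0:ℝ) < n + 2 := by linarith
  have h3 : (0:ℝ) < n + 3 := by linarith
  have hb : ∀ m : ℕ, (0:ℝ) < (m:ℝ) →
      b m = (3 + 2*s) * (2*(m:ℝ) - 3) / (2*(m:ℝ)) := by
    intro m hm
    rw [b, ← hs]
    field_simp
    ring
  have e0 : b k = (3 + 2*s) * (2*n - 3) / (2*n) := hb k h0
  have e1 : b (k+1) = (3 + 2*s) * (2*(n+1) - 3) / (2*(n+1)) := by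
    rw [hb (k+1) (by push_cast; linarith)]; push_cast; ring_nf; rw [← hndef]
  have e2 : b (k+2) = (3 + 2*s) * (2*(n+2) - 3) / (2*(n+2)) := by
    rw [hb (k+2) (by push_cast; linarith)]; push_cast; ring_nf; rw [← hndef]
  have e3 : b (k+3) = (3 + 2*s) * (2*(n+3) - 3) / (2*(n+3)) := by
    rw [hb (k+3) (by push_cast; linarith)]; push_cast; ring_nf; rw [← hndef]
  rw [e0, e1, e2, e3]
  have hB : (2*(3+2*s)^3*(7*n+13)*(2*n-3)*(2*n-1)*(2*n+1)
        - 4*(3+2*s)^2*(7*n+15)*(2*n-3)*(2*n-1)*(n+2)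
        + 8*(3+2*s)*n*(n+1)^2*(2*n+1)
        - (3+2*s)^4*(2*n-3)*(2*n-1)*(2*n+1)*(2*n+3))
      = (-(4296 + 3048*s) * n^2 + (9438 + 6660*s) * n - (3591 + 2532*s)) := by
    linear_combination (-864 - 240*s - 144*s^2 + 2088*n - 80*n*s - 864*n^2
      + 1120*n^2*s + 640*n^2*s^2 + 480*n^3 + 320*n^3*s - 384*n^4 - 640*n^4*s
      - 256*n^4*s^2) * hs2
  have key :
      (7 * n + 13) * ((3 + 2*s) * (2*n - 3) / (2*n)) *
          ((3 + 2*s) * (2*(n+1) - 3) / (2*(n+1))) *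
          ((3 + 2*s) * (2*(n+2) - 3) / (2*(n+2)))
        - (7 * n + 15) * ((3 + 2*s) * (2*n - 3) / (2*n)) *
          ((3 + 2*s) * (2*(n+1) - 3) / (2*(n+1)))
        + (n + 1) * ((3 + 2*s) * (2*(n+2) - 3) / (2*(n+2)))
        - (n + 3) * ((3 + 2*s) * (2*n - 3) / (2*n)) *
          ((3 + 2*s) * (2*(n+1) - 3) / (2*(n+1))) *
          ((3 + 2*s) * (2*(n+2) - 3) / (2*(n+2))) *
          ((3 + 2*s) * (2*(n+3) - 3) / (2*(n+3)))
      = (2*(3+2*s)^3*(7*n+13)*(2*n-3)*(2*n-1)*(2*n+1)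
          - 4*(3+2*s)^2*(7*n+15)*(2*n-3)*(2*n-1)*(n+2)
          + 8*(3+2*s)*n*(n+1)^2*(2*n+1)
          - (3+2*s)^4*(2*n-3)*(2*n-1)*(2*n+1)*(2*n+3))
          / (16 * n * (n+1) * (n+2)) := by
    have h0' := h0.ne'
    have h1' := h1.ne'
    have h2' := h2.ne'
    have h3' := h3.ne'
    field_simp
    ring
  rw [key, hB]
  apply div_neg_of_neg_of_pos
  · nlinarith [hs1, hs1', hn, sq_nonneg n, mul_pos h0 h0]
  · positivity
end

section
/- For all integers k \ge 4, with b_n = (3 - 9/(2n)) + \sqrt{2}(2 - 3/n), one has (7k+13)b_{k+1} b_{k+2} - (7k+15)b_{k+2} + (k+1) - (k+3)b_{k+1} b_{k+2}^2 > 0. -/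
theorem stmt_9 : ∀ k : ℕ, 4 ≤ k →
    (7 * (k : ℝ) + 13) * b (k + 1) * b (k + 2)
      - (7 * (k : ℝ) + 15) * b (k + 2)
      + ((k : ℝ) + 1)
      - ((k : ℝ) + 3) * b (k + 1) * b (k + 2) ^ 2 > 0 := by
  intro k hk
  have hk' : (4:ℝ) ≤ k := by exact_mod_cast hk
  have h1 : (0:ℝ) < (k:ℝ) + 1 := by linarith
  have h2 : (0:ℝ) < (k:ℝ) + 2 := by linarith
  have hs2 : Real.sqrt 2 ^ 2 = 2 := Real.sq_sqrt (by norm_num)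
  have hs0 : 0 ≤ Real.sqrt 2 := Real.sqrt_nonneg 2
  have hb1 : 2 * ((k:ℝ) + 1) * b (k + 1)
      = (2 * (k:ℝ) - 1) * (3 + 2 * Real.sqrt 2) := by
    unfold b
    push_cast
    field_simp
    ring
  have hb2 : 2 * ((k:ℝ) + 2) * b (k + 2)
      = (2 * (k:ℝ) + 1) * (3 + 2 * Real.sqrt 2) := by
    unfold b
    push_cast
    field_simp
    ring
  have key : ((7 * (k : ℝ) + 13) * b (k + 1) * b (k + 2)
      - (7 * (k : ℝ) + 15) * b (k + 2)
      + ((k : ℝ) + 1)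
      - ((k : ℝ) + 3) * b (k + 1) * b (k + 2) ^ 2)
      * (8 * ((k:ℝ) + 1) * ((k:ℝ) + 2) ^ 2)
      = (564 * (k:ℝ) ^ 2 - 1557 * (k:ℝ) - 915)
        + Real.sqrt 2 * (396 * (k:ℝ) ^ 2 - 1110 * (k:ℝ) - 654) := by
    linear_combination
      ((7 * (k:ℝ) + 13) * 4 * ((k:ℝ) + 2) ^ 2 * b (k + 2)
        - ((k:ℝ) + 3) * 4 * ((k:ℝ) + 2) ^ 2 * b (k + 2) ^ 2) * hb1
      + ((7 * (k:ℝ) + 13) * 2 * ((k:ℝ) + 2) * ((2 * (k:ℝ) - 1) * (3 + 2 * Real.sqrt 2))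
        - (7 * (k:ℝ) + 15) * 4 * ((k:ℝ) + 1) * ((k:ℝ) + 2)
        - ((k:ℝ) + 3) * ((2 * (k:ℝ) - 1) * (3 + 2 * Real.sqrt 2))
          * (2 * ((k:ℝ) + 2) * b (k + 2) + (2 * (k:ℝ) + 1) * (3 + 2 * Real.sqrt 2))) * hb2
      + ((7 * (k:ℝ) + 13) * 2 * ((k:ℝ) + 2) * (2 * (k:ℝ) - 1) * (2 * (k:ℝ) + 1) * 4
        - ((k:ℝ) + 3) * (2 * (k:ℝ) - 1) * (2 * (k:ℝ) + 1) ^ 2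
          * (36 + 8 * Real.sqrt 2)) * hs2
  have hN : (0:ℝ) < (564 * (k:ℝ) ^ 2 - 1557 * (k:ℝ) - 915)
      + Real.sqrt 2 * (396 * (k:ℝ) ^ 2 - 1110 * (k:ℝ) - 654) := by
    have ha : (0:ℝ) < 564 * (k:ℝ) ^ 2 - 1557 * (k:ℝ) - 915 := by nlinarith
    have hbb : (0:ℝ) ≤ 396 * (k:ℝ) ^ 2 - 1110 * (k:ℝ) - 654 := by nlinarith
    nlinarith [mul_nonneg hs0 hbb]
  have hD : (0:ℝ) < 8 * ((k:ℝ) + 1) * ((k:ℝ) + 2) ^ 2 := by positivity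
  rw [gt_iff_lt]
  by_contra h
  push_neg at h
  nlinarith [key, hN, hD, mul_nonneg (neg_nonneg.mpr h) hD.le]
end

section
/- The sequence R_n^{1/n} converges to 3 + 2\sqrt{2} as n \to \infty. -/
open Finset Real Filter Topology

section Aux

lemma aux_choose_mul_pow_le (m k : ℕ) (x : ℝ) (hx : 0 ≤ x) :
    (m.choose k : ℝ) * x ^ k ≤ (1 + x) ^ m := by
  rcases le_or_gt k m with h | h
  · have h1 : (x + 1) ^ m = ∑ i ∈ range (m + 1), x ^ i * 1 ^ (m - i) * (m.choose i : ℝ) :=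
      add_pow x 1 m
    have h2 : x ^ k * 1 ^ (m - k) * (m.choose k : ℝ) ≤ (x + 1) ^ m := by
      rw [h1]
      exact Finset.single_le_sum (f := fun i => x ^ i * 1 ^ (m - i) * (m.choose i : ℝ))
        (fun i _ => by positivity) (mem_range.2 (Nat.lt_succ_of_le h))
    calc (m.choose k : ℝ) * x ^ k = x ^ k * 1 ^ (m - k) * (m.choose k : ℝ) := by ring
      _ ≤ (x + 1) ^ m := h2
      _ = (1 + x) ^ m := by ring
  · rw [Nat.choose_eq_zero_of_lt h]
    have h1 : (0:ℝ) < 1 + x := by linarith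
    simp
    positivity

lemma aux_term_upper (n k : ℕ) :
    (n.choose k : ℝ) * ((n + k).choose k : ℝ) ≤ (3 + 2 * Real.sqrt 2) ^ n := by
  set s := Real.sqrt 2 with hsdef
  have hs2 : s ^ 2 = 2 := Real.sq_sqrt (by norm_num)
  have hs0 : 0 < s := Real.sqrt_pos.2 (by norm_num)
  have h1 := aux_choose_mul_pow_le n k (1 + s) (by linarith)
  have h2 := aux_choose_mul_pow_le (n + k) k (s / 2) (by linarith)
  have key : (1 + s) * (s / 2) = 1 + s / 2 := by nlinarith
  have key2 : (2 + s) * (1 + s / 2) = 3 + 2 * s := by nlinarith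
  have hpos : (0:ℝ) < (1 + s / 2) ^ k := by positivity
  have hmain : ((n.choose k : ℝ) * ((n + k).choose k : ℝ)) * (1 + s / 2) ^ k
      ≤ ((3 + 2 * s) ^ n) * (1 + s / 2) ^ k := by
    have hc2 : (0:ℝ) ≤ ((n + k).choose k : ℝ) * (s / 2) ^ k := by positivity
    calc ((n.choose k : ℝ) * ((n + k).choose k : ℝ)) * (1 + s / 2) ^ k
        = ((n.choose k : ℝ) * (1 + s) ^ k) * (((n + k).choose k : ℝ) * (s / 2) ^ k) := by
          rw [← key, mul_pow]; ring
      _ ≤ (1 + (1 + s)) ^ n * (1 + s / 2) ^ (n + k) := by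
          apply mul_le_mul h1 h2 hc2 (by positivity)
      _ = ((2 + s) ^ n * (1 + s / 2) ^ n) * (1 + s / 2) ^ k := by
          rw [pow_add]; ring_nf
      _ = ((3 + 2 * s) ^ n) * (1 + s / 2) ^ k := by
          rw [← mul_pow, key2]
  exact le_of_mul_le_mul_right hmain hpos

lemma aux_vdm_term (n k j : ℕ) (hjk : j ≤ k) :
    n.choose j * k.choose j ≤ (n + k).choose k := by
  rw [Nat.add_choose_eq]
  have hmem : (j, k - j) ∈ Finset.HasAntidiagonal.antidiagonal k := by
    rw [Finset.HasAntidiagonal.mem_antidiagonal]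
    omega
  have := Finset.single_le_sum (f := fun ij : ℕ × ℕ => n.choose ij.1 * k.choose ij.2)
    (fun i _ => Nat.zero_le _) hmem
  simpa [Nat.choose_symm hjk] using this

lemma aux_sum_choose_mul (n j : ℕ) (hj : j ≤ n) :
    ∑ k ∈ range (n + 1), n.choose k * k.choose j = n.choose j * 2 ^ (n - j) := by
  have hsub : Finset.Icc j n ⊆ range (n + 1) := by
    intro x hx
    rw [Finset.mem_Icc] at hx
    exact mem_range.2 (Nat.lt_succ_of_le hx.2)
  rw [← Finset.sum_subset hsub (by
    intro x hx hx2
    rw [mem_range] at hx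
    rw [Finset.mem_Icc] at hx2
    have : x < j := by omega
    rw [Nat.choose_eq_zero_of_lt this, Nat.mul_zero])]
  have : ∀ k ∈ Finset.Icc j n, n.choose k * k.choose j
      = n.choose j * (n - j).choose (k - j) := by
    intro k hk
    rw [Finset.mem_Icc] at hk
    exact Nat.choose_mul hk.1
  rw [Finset.sum_congr rfl this, ← Finset.mul_sum]
  congr 1
  rw [show Finset.Icc j n = Finset.Ico j (n + 1) by rw [Finset.Ico_add_one_right_eq_Icc],
    Finset.sum_Ico_eq_sum_range]
  simp only [Nat.add_sub_cancel_left]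
  have h2 : n + 1 - j = (n - j) + 1 := by omega
  rw [h2, Nat.sum_range_choose]

def Dn (n : ℕ) : ℕ := ∑ k ∈ range (n + 1), n.choose k * (n + k).choose k

lemma aux_D_lower_j (n j : ℕ) (hj : j ≤ n) :
    n.choose j * n.choose j * 2 ^ (n - j) ≤ Dn n := by
  have hterm : ∀ k ∈ range (n + 1),
      n.choose j * (n.choose k * k.choose j) ≤ n.choose k * (n + k).choose k := by
    intro k _
    rcases le_or_gt j k with h | h
    · calc n.choose j * (n.choose k * k.choose j)
          = n.choose k * (n.choose j * k.choose j) := by ring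
        _ ≤ n.choose k * (n + k).choose k :=
          Nat.mul_le_mul_left _ (aux_vdm_term n k j h)
    · rw [Nat.choose_eq_zero_of_lt h]
      simp
  calc n.choose j * n.choose j * 2 ^ (n - j)
      = n.choose j * (n.choose j * 2 ^ (n - j)) := by ring
    _ = ∑ k ∈ range (n + 1), n.choose j * (n.choose k * k.choose j) := by
        rw [← Finset.mul_sum, aux_sum_choose_mul n j hj]
    _ ≤ Dn n := Finset.sum_le_sum hterm

lemma aux_CS (n : ℕ) :
    (3 + 2 * Real.sqrt 2) ^ n
      ≤ (n + 1 : ℝ) * ∑ j ∈ range (n + 1),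
          ((n.choose j : ℝ) ^ 2 * 2 ^ (n - j)) := by
  set s := Real.sqrt 2 with hsdef
  have hs2 : s ^ 2 = 2 := Real.sq_sqrt (by norm_num)
  have hs0 : 0 < s := Real.sqrt_pos.2 (by norm_num)
  have hbin : (1 + s) ^ n = ∑ j ∈ range (n + 1), (n.choose j : ℝ) * s ^ (n - j) := by
    rw [add_pow]
    exact Finset.sum_congr rfl (fun j _ => by ring)
  have hcs := sq_sum_le_card_mul_sum_sq
    (s := range (n + 1)) (f := fun j => (n.choose j : ℝ) * s ^ (n - j))
  rw [← hbin] at hcs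
  have hsq : ∀ j ∈ range (n + 1),
      ((n.choose j : ℝ) * s ^ (n - j)) ^ 2 = (n.choose j : ℝ) ^ 2 * 2 ^ (n - j) := by
    intro j _
    rw [mul_pow, ← pow_mul, mul_comm (n - j) 2, pow_mul, hs2]
  rw [Finset.sum_congr rfl hsq] at hcs
  calc (3 + 2 * s) ^ n = ((1 + s) ^ n) ^ 2 := by
        rw [← pow_mul, mul_comm n 2, pow_mul]
        congr 1
        nlinarith
    _ ≤ (n + 1 : ℝ) * ∑ j ∈ range (n + 1), ((n.choose j : ℝ) ^ 2 * 2 ^ (n - j)) := by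
        simpa using hcs

lemma aux_c_pos : (0:ℝ) < 3 + 2 * Real.sqrt 2 := by
  have := Real.sqrt_nonneg 2; linarith

lemma aux_c_gt_one : (1:ℝ) < 3 + 2 * Real.sqrt 2 := by
  have := Real.sqrt_nonneg 2; linarith

lemma aux_D_lower (n : ℕ) :
    (3 + 2 * Real.sqrt 2) ^ n ≤ ((n:ℝ) + 1) ^ 2 * (Dn n : ℝ) := by
  have h1 := aux_CS n
  have h2 : ∑ j ∈ range (n + 1), ((n.choose j : ℝ) ^ 2 * 2 ^ (n - j))
      ≤ ((n:ℝ) + 1) * (Dn n : ℝ) := by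
    calc ∑ j ∈ range (n + 1), ((n.choose j : ℝ) ^ 2 * 2 ^ (n - j))
        ≤ ∑ _j ∈ range (n + 1), (Dn n : ℝ) := by
          apply Finset.sum_le_sum
          intro j hj
          have h := aux_D_lower_j n j (Nat.lt_succ_iff.1 (mem_range.1 hj))
          have := (Nat.cast_le (α := ℝ)).2 h
          push_cast at this
          nlinarith [this]
      _ = ((n:ℝ) + 1) * (Dn n : ℝ) := by
          rw [Finset.sum_const, card_range]; push_cast; ring
  calc (3 + 2 * Real.sqrt 2) ^ n
      ≤ ((n:ℝ) + 1) * (((n:ℝ) + 1) * (Dn n : ℝ)) := by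
        refine le_trans h1 ?_
        apply mul_le_mul_of_nonneg_left h2 (by positivity)
    _ = ((n:ℝ) + 1) ^ 2 * (Dn n : ℝ) := by ring

lemma aux_R_cast (n : ℕ) : (R n : ℝ) = ∑ k ∈ range (n + 1),
    (Nat.choose n k : ℝ) * (Nat.choose (n + k) k : ℝ) * (1 / (2 * (k : ℝ) - 1)) := by
  unfold R
  push_cast
  rfl

lemma aux_R_upper (n : ℕ) : (R n : ℝ) ≤ ((n:ℝ) + 1) * (3 + 2 * Real.sqrt 2) ^ n := by
  rw [aux_R_cast]
  have h : ∀ k ∈ range (n + 1),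
      (Nat.choose n k : ℝ) * (Nat.choose (n + k) k : ℝ) * (1 / (2 * (k : ℝ) - 1))
        ≤ (3 + 2 * Real.sqrt 2) ^ n := by
    intro k _
    rcases Nat.eq_zero_or_pos k with rfl | hk
    · norm_num
      linarith [pow_pos aux_c_pos n]
    · have hk1 : (1:ℝ) ≤ (k:ℝ) := by exact_mod_cast hk
      have h2 : (0:ℝ) < 2 * (k:ℝ) - 1 := by linarith
      have h3 : 1 / (2 * (k:ℝ) - 1) ≤ 1 := by
        rw [div_le_one h2]; linarith
      have h4 : (0:ℝ) ≤ (Nat.choose n k : ℝ) * (Nat.choose (n + k) k : ℝ) := by positivity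
      calc (Nat.choose n k : ℝ) * (Nat.choose (n + k) k : ℝ) * (1 / (2 * (k : ℝ) - 1))
          ≤ (Nat.choose n k : ℝ) * (Nat.choose (n + k) k : ℝ) * 1 :=
            mul_le_mul_of_nonneg_left h3 h4
        _ = (Nat.choose n k : ℝ) * (Nat.choose (n + k) k : ℝ) := by ring
        _ ≤ (3 + 2 * Real.sqrt 2) ^ n := aux_term_upper n k
  calc (∑ k ∈ range (n + 1),
      (Nat.choose n k : ℝ) * (Nat.choose (n + k) k : ℝ) * (1 / (2 * (k : ℝ) - 1)))
      ≤ ∑ _k ∈ range (n + 1), (3 + 2 * Real.sqrt 2) ^ n := Finset.sum_le_sum h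
    _ = ((n:ℝ) + 1) * (3 + 2 * Real.sqrt 2) ^ n := by
        rw [Finset.sum_const, card_range]; push_cast; ring

lemma aux_R_lower (n : ℕ) (hn : 1 ≤ n) :
    (Dn n : ℝ) / (2 * n) - 2 ≤ (R n : ℝ) := by
  have hn0 : (0:ℝ) < 2 * (n:ℝ) := by
    have : (1:ℝ) ≤ (n:ℝ) := by exact_mod_cast hn
    linarith
  rw [aux_R_cast, sub_le_iff_le_add]
  have hD : (Dn n : ℝ) = ∑ k ∈ range (n + 1),
      (Nat.choose n k : ℝ) * (Nat.choose (n + k) k : ℝ) := by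
    unfold Dn; push_cast; rfl
  rw [hD, Finset.sum_div, Finset.sum_range_succ' _ n, Finset.sum_range_succ'
    (fun k => (Nat.choose n k : ℝ) * (Nat.choose (n + k) k : ℝ) * (1 / (2 * (k : ℝ) - 1))) n]
  have hmain : ∀ i ∈ range n,
      (Nat.choose n (i+1) : ℝ) * (Nat.choose (n + (i+1)) (i+1) : ℝ) / (2 * n)
        ≤ (Nat.choose n (i+1) : ℝ) * (Nat.choose (n + (i+1)) (i+1) : ℝ)
            * (1 / (2 * ((i+1 : ℕ) : ℝ) - 1)) := by
    intro i hi
    have h1 : (0:ℝ) < 2 * ((i+1 : ℕ) : ℝ) - 1 := by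
      push_cast; linarith [Nat.cast_nonneg (α := ℝ) i]
    have h2 : 2 * ((i+1 : ℕ) : ℝ) - 1 ≤ 2 * (n:ℝ) := by
      have : ((i+1 : ℕ) : ℝ) ≤ (n : ℝ) := by
        exact_mod_cast Nat.succ_le_of_lt (mem_range.1 hi)
      linarith
    have h4 : (0:ℝ) ≤ (Nat.choose n (i+1) : ℝ) * (Nat.choose (n + (i+1)) (i+1) : ℝ) := by
      positivity
    have h5 : 1 / (2 * (n:ℝ)) ≤ 1 / (2 * ((i+1 : ℕ) : ℝ) - 1) :=
      one_div_le_one_div_of_le h1 h2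
    calc (Nat.choose n (i+1) : ℝ) * (Nat.choose (n + (i+1)) (i+1) : ℝ) / (2 * n)
        = (Nat.choose n (i+1) : ℝ) * (Nat.choose (n + (i+1)) (i+1) : ℝ) * (1 / (2 * (n:ℝ))) := by
          ring
      _ ≤ (Nat.choose n (i+1) : ℝ) * (Nat.choose (n + (i+1)) (i+1) : ℝ)
            * (1 / (2 * ((i+1 : ℕ) : ℝ) - 1)) := mul_le_mul_of_nonneg_left h5 h4
  have hsum := Finset.sum_le_sum hmain
  have h0 : (Nat.choose n 0 : ℝ) * (Nat.choose (n + 0) 0 : ℝ) / (2 * n)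
      ≤ (Nat.choose n 0 : ℝ) * (Nat.choose (n + 0) 0 : ℝ) * (1 / (2 * ((0 : ℕ) : ℝ) - 1)) + 2 := by
    simp only [Nat.choose_zero_right, Nat.cast_one, one_mul, Nat.cast_zero]
    have hn1 : (1:ℝ) ≤ (n:ℝ) := by exact_mod_cast hn
    have hinv : ((n:ℝ))⁻¹ ≤ 1 := by
      rw [inv_le_one_iff₀]; right; exact hn1
    norm_num
    linarith
  push_cast at hsum h0 ⊢
  linarith

lemma aux_ev_big : ∀ᶠ n : ℕ in atTop, 8 * ((n:ℝ) + 1) ^ 3 ≤ (3 + 2 * Real.sqrt 2) ^ n := by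
  set c : ℝ := 3 + 2 * Real.sqrt 2 with hc
  have hc1 : (1:ℝ) < c := aux_c_gt_one
  have hc0 : (0:ℝ) < c := aux_c_pos
  have hr0 : (0:ℝ) ≤ c⁻¹ := by positivity
  have hr1 : c⁻¹ < 1 := inv_lt_one_of_one_lt₀ hc1
  have h := tendsto_pow_const_mul_const_pow_of_lt_one 3 hr0 hr1
  have h2 : ∀ᶠ n : ℕ in atTop, (n:ℝ) ^ 3 * (c⁻¹) ^ n < 1 / 64 :=
    h.eventually_lt_const (by norm_num)
  filter_upwards [h2, eventually_ge_atTop 1] with n hn hn1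
  have hn1' : (1:ℝ) ≤ (n:ℝ) := by exact_mod_cast hn1
  have hcn : (0:ℝ) < c ^ n := pow_pos hc0 n
  have h3 : (n:ℝ) ^ 3 * (c ^ n)⁻¹ < 1 / 64 := by rwa [← inv_pow]
  have h4 : 64 * (n:ℝ) ^ 3 < c ^ n := by
    rw [mul_inv_lt_iff₀ hcn] at h3
    nlinarith
  have ha : (n:ℝ) ≤ (n:ℝ) ^ 2 := by nlinarith
  have hb : (n:ℝ) ^ 2 ≤ (n:ℝ) ^ 3 := by nlinarith
  have h5 : ((n:ℝ) + 1) ^ 3 ≤ 8 * (n:ℝ) ^ 3 := by nlinarith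
  nlinarith

lemma aux_log_aux : Tendsto (fun n : ℕ => Real.log ((n:ℝ) + 1) / n) atTop (𝓝 0) := by
  have h1 : Tendsto (fun n : ℕ => Real.log ((n:ℝ) + 1) / ((n:ℝ) + 1)) atTop (𝓝 0) := by
    exact (Real.isLittleO_log_id_atTop.tendsto_div_nhds_zero).comp
      (tendsto_atTop_add_const_right atTop 1 tendsto_natCast_atTop_atTop)
  have h2 : Tendsto (fun n : ℕ => ((n:ℝ) + 1) / n) atTop (𝓝 1) := by
    have h0 := tendsto_one_div_atTop_nhds_zero_nat (𝕜 := ℝ)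
    have h3 : Tendsto (fun n : ℕ => 1 + 1 / (n:ℝ)) atTop (𝓝 (1 + 0)) :=
      tendsto_const_nhds.add h0
    rw [add_zero] at h3
    apply h3.congr'
    filter_upwards [eventually_ge_atTop 1] with n hn
    have : (0:ℝ) < (n:ℝ) := by exact_mod_cast hn
    field_simp
  have hmul := h1.mul h2
  rw [zero_mul] at hmul
  apply hmul.congr'
  filter_upwards [eventually_ge_atTop 1] with n hn
  have hn0 : (0:ℝ) < (n:ℝ) := by exact_mod_cast hn
  have hn1 : (0:ℝ) < (n:ℝ) + 1 := by linarith
  field_simp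

lemma aux_ev_R_lower : ∀ᶠ n : ℕ in atTop,
    (3 + 2 * Real.sqrt 2) ^ n / (4 * ((n:ℝ) + 1) ^ 3) ≤ (R n : ℝ) := by
  filter_upwards [aux_ev_big, eventually_ge_atTop 1] with n hbig hn1
  set c : ℝ := 3 + 2 * Real.sqrt 2 with hc
  have hN : (1:ℝ) ≤ (n:ℝ) := by exact_mod_cast hn1
  have hP : (0:ℝ) < (n:ℝ) + 1 := by linarith
  have hcn : (0:ℝ) < c ^ n := pow_pos aux_c_pos n
  have hD := aux_D_lower n
  have hR := aux_R_lower n hn1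
  have h1 : c ^ n / (((n:ℝ) + 1) ^ 2) ≤ (Dn n : ℝ) := by
    rw [div_le_iff₀ (by positivity)]
    linarith
  have h2 : c ^ n / (((n:ℝ) + 1) ^ 2) / (2 * (n:ℝ)) ≤ (Dn n : ℝ) / (2 * (n:ℝ)) := by
    gcongr
  have h3 : c ^ n / (((n:ℝ) + 1) ^ 2) / (2 * (n:ℝ))
      = c ^ n / (2 * (n:ℝ) * ((n:ℝ) + 1) ^ 2) := by
    rw [div_div]; ring_nf
  have h4 : c ^ n / (2 * ((n:ℝ) + 1) ^ 3) ≤ c ^ n / (2 * (n:ℝ) * ((n:ℝ) + 1) ^ 2) := by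
    apply div_le_div_of_nonneg_left (le_of_lt hcn) (by positivity)
    nlinarith
  have h5 : (2:ℝ) ≤ c ^ n / (4 * ((n:ℝ) + 1) ^ 3) := by
    rw [le_div_iff₀ (by positivity)]
    linarith
  have h6 : c ^ n / (2 * ((n:ℝ) + 1) ^ 3)
      = c ^ n / (4 * ((n:ℝ) + 1) ^ 3) + c ^ n / (4 * ((n:ℝ) + 1) ^ 3) := by
    field_simp
    ring
  linarith

theorem stmt_13 :
    Filter.Tendsto (fun n : ℕ => (R n : ℝ) ^ (1 / (n : ℝ))) Filter.atTop
      (nhds (3 + 2 * Real.sqrt 2)) := by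
  set c : ℝ := 3 + 2 * Real.sqrt 2 with hc
  have hc0 : (0:ℝ) < c := aux_c_pos
  have hRpos : ∀ᶠ n : ℕ in atTop, (0:ℝ) < (R n : ℝ) := by
    filter_upwards [aux_ev_R_lower] with n hn
    have : (0:ℝ) < c ^ n / (4 * ((n:ℝ) + 1) ^ 3) := by positivity
    linarith
  have hlog : Tendsto (fun n : ℕ => Real.log (R n : ℝ) / n) atTop (𝓝 (Real.log c)) := by
    apply tendsto_of_tendsto_of_tendsto_of_le_of_le'
      (g := fun n : ℕ => Real.log c - (Real.log 4 + 3 * Real.log ((n:ℝ) + 1)) / n)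
      (h := fun n : ℕ => Real.log c + Real.log ((n:ℝ) + 1) / n)
    · have h1 : Tendsto (fun n : ℕ => (Real.log 4) / (n:ℝ) + 3 * (Real.log ((n:ℝ) + 1) / n))
          atTop (𝓝 (0 + 3 * 0)) :=
        (tendsto_const_div_atTop_nhds_zero_nat _).add (aux_log_aux.const_mul 3)
      rw [show (0:ℝ) + 3 * 0 = 0 by ring] at h1
      have h2 : Tendsto (fun n : ℕ => Real.log c - ((Real.log 4) / (n:ℝ)
          + 3 * (Real.log ((n:ℝ) + 1) / n))) atTop (𝓝 (Real.log c - 0)) :=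
        tendsto_const_nhds.sub h1
      rw [sub_zero] at h2
      apply h2.congr
      intro n
      ring
    · have h2 : Tendsto (fun n : ℕ => Real.log c + Real.log ((n:ℝ) + 1) / n)
          atTop (𝓝 (Real.log c + 0)) := tendsto_const_nhds.add aux_log_aux
      rwa [add_zero] at h2
    · filter_upwards [aux_ev_R_lower, hRpos, eventually_ge_atTop 1] with n hlow hpos hn1
      have hN : (1:ℝ) ≤ (n:ℝ) := by exact_mod_cast hn1
      have hN0 : (0:ℝ) < (n:ℝ) := by linarith
      have hP : (0:ℝ) < (n:ℝ) + 1 := by linarith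
      have hcn : (0:ℝ) < c ^ n := pow_pos hc0 n
      have hlog1 : Real.log (c ^ n / (4 * ((n:ℝ) + 1) ^ 3)) ≤ Real.log (R n : ℝ) :=
        Real.log_le_log (by positivity) hlow
      have hlog2 : Real.log (c ^ n / (4 * ((n:ℝ) + 1) ^ 3))
          = (n:ℝ) * Real.log c - (Real.log 4 + 3 * Real.log ((n:ℝ) + 1)) := by
        rw [Real.log_div (ne_of_gt hcn) (by positivity), Real.log_pow,
          Real.log_mul (by norm_num) (by positivity), Real.log_pow]
        push_cast
        ring
      rw [hlog2] at hlog1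
      have : Real.log c - (Real.log 4 + 3 * Real.log ((n:ℝ) + 1)) / n
          = ((n:ℝ) * Real.log c - (Real.log 4 + 3 * Real.log ((n:ℝ) + 1))) / n := by
        field_simp
        try ring
      rw [this]
      gcongr
    · filter_upwards [hRpos, eventually_ge_atTop 1] with n hpos hn1
      have hN : (1:ℝ) ≤ (n:ℝ) := by exact_mod_cast hn1
      have hN0 : (0:ℝ) < (n:ℝ) := by linarith
      have hP : (0:ℝ) < (n:ℝ) + 1 := by linarith
      have hcn : (0:ℝ) < c ^ n := pow_pos hc0 n
      have hup := aux_R_upper n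
      have hlog1 : Real.log (R n : ℝ) ≤ Real.log (((n:ℝ) + 1) * c ^ n) :=
        Real.log_le_log hpos hup
      have hlog2 : Real.log (((n:ℝ) + 1) * c ^ n)
          = Real.log ((n:ℝ) + 1) + (n:ℝ) * Real.log c := by
        rw [Real.log_mul (ne_of_gt hP) (ne_of_gt hcn), Real.log_pow]
      rw [hlog2] at hlog1
      have : Real.log c + Real.log ((n:ℝ) + 1) / n
          = (Real.log ((n:ℝ) + 1) + (n:ℝ) * Real.log c) / n := by
        field_simp
        try ring
      rw [this]
      gcongr
  have hexp : Tendsto (fun n : ℕ => Real.exp (Real.log (R n : ℝ) / n)) atTop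
      (𝓝 (Real.exp (Real.log c))) :=
    (Real.continuous_exp.tendsto _).comp hlog
  rw [Real.exp_log hc0] at hexp
  apply hexp.congr'
  filter_upwards [hRpos] with n hpos
  rw [Real.rpow_def_of_pos hpos]
  congr 1
  ring
end Aux
end

section
/- The sequence R_{n+1}^{1/(n+1)} / R_n^{1/n} converges to 1 as n \to \infty. -/
open Finset Filter Real Topology

/-- Central Delannoy-type normalizing sequence. -/
def DD (n : ℕ) : ℕ := ∑ k ∈ Finset.range (n + 1), n.choose k * (n + k).choose k

lemma choose_le_two_pow' (m k : ℕ) : m.choose k ≤ 2 ^ m := by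
  rcases le_or_gt k m with h | h
  · calc m.choose k ≤ ∑ j ∈ Finset.range (m + 1), m.choose j :=
        Finset.single_le_sum (f := fun j => m.choose j) (fun i _ => Nat.zero_le _)
          (Finset.mem_range.2 (by omega))
      _ = 2 ^ m := Nat.sum_range_choose m
  · rw [Nat.choose_eq_zero_of_lt h]; exact Nat.zero_le _

lemma DD_pos (n : ℕ) : 0 < DD n := by
  have h0 : (0 : ℕ) ∈ Finset.range (n + 1) := by simp
  have h1 : 0 < n.choose 0 * (n + 0).choose 0 := by simp
  exact lt_of_lt_of_le h1
    (Finset.single_le_sum (f := fun k => n.choose k * (n + k).choose k)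
      (fun i _ => Nat.zero_le _) h0)

lemma two_pow_le_DD (n : ℕ) : 2 ^ n ≤ DD n := by
  rw [← Nat.sum_range_choose]
  refine Finset.sum_le_sum fun k _ => ?_
  have : 1 ≤ (n + k).choose k := Nat.choose_pos (Nat.le_add_left _ _)
  calc n.choose k = n.choose k * 1 := by ring
    _ ≤ n.choose k * (n + k).choose k := Nat.mul_le_mul_left _ this

lemma DD_le (n : ℕ) : DD n ≤ 8 ^ n := by
  have : ∀ k ∈ Finset.range (n + 1), n.choose k * (n + k).choose k ≤ n.choose k * 4 ^ n := by
    intro k hk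
    refine Nat.mul_le_mul_left _ ?_
    calc (n + k).choose k ≤ 2 ^ (n + k) := choose_le_two_pow' _ _
      _ ≤ 2 ^ (n + n) := Nat.pow_le_pow_right (by norm_num) (by
          have := Finset.mem_range.1 hk; omega)
      _ = 4 ^ n := by rw [pow_add, ← Nat.mul_pow]
  calc DD n ≤ ∑ k ∈ Finset.range (n + 1), n.choose k * 4 ^ n := Finset.sum_le_sum this
    _ = (∑ k ∈ Finset.range (n + 1), n.choose k) * 4 ^ n := by rw [Finset.sum_mul]
    _ = 2 ^ n * 4 ^ n := by rw [Nat.sum_range_choose]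
    _ = 8 ^ n := by rw [← Nat.mul_pow]

lemma choose_mul_choose_le (p q i j : ℕ) :
    p.choose i * q.choose j ≤ (p + q).choose (i + j) := by
  rw [Nat.add_choose_eq]
  exact Finset.single_le_sum (f := fun ij : ℕ × ℕ => p.choose ij.1 * q.choose ij.2)
    (fun _ _ => Nat.zero_le _) (a := (i, j)) (Finset.HasAntidiagonal.mem_antidiagonal.2 rfl)

lemma DD_supermul (m n : ℕ) : DD m * DD n ≤ DD (m + n) := by
  set F : ℕ × ℕ → ℕ := fun p =>
    (m.choose p.1 * (m + p.1).choose p.1) * (n.choose p.2 * (n + p.2).choose p.2) with hF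
  have hstep1 : DD m * DD n = ∑ p ∈ (Finset.range (m + 1)) ×ˢ (Finset.range (n + 1)), F p := by
    rw [DD, DD, Finset.sum_mul_sum, Finset.sum_product]
  set T : Finset (ℕ × ℕ) := (Finset.range (m + n + 1)).biUnion (fun k => Finset.HasAntidiagonal.antidiagonal k)
    with hT
  have hsub : (Finset.range (m + 1)) ×ˢ (Finset.range (n + 1)) ⊆ T := by
    intro p hp
    rw [Finset.mem_product, Finset.mem_range, Finset.mem_range] at hp
    exact Finset.mem_biUnion.2 ⟨p.1 + p.2, Finset.mem_range.2 (by omega),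
      Finset.HasAntidiagonal.mem_antidiagonal.2 rfl⟩
  have hstep2 : ∑ p ∈ (Finset.range (m + 1)) ×ˢ (Finset.range (n + 1)), F p ≤ ∑ p ∈ T, F p :=
    Finset.sum_le_sum_of_subset hsub
  have hdisj : (↑(Finset.range (m + n + 1)) : Set ℕ).PairwiseDisjoint
      (fun k => Finset.HasAntidiagonal.antidiagonal k) := by
    intro a _ b _ hab
    refine Finset.disjoint_left.2 fun p hpa hpb => ?_
    rw [Finset.HasAntidiagonal.mem_antidiagonal] at hpa hpb
    exact hab (hpa ▸ hpb ▸ rfl)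
  have hstep3 : ∑ p ∈ T, F p =
      ∑ k ∈ Finset.range (m + n + 1), ∑ p ∈ Finset.HasAntidiagonal.antidiagonal k, F p :=
    Finset.sum_biUnion hdisj
  have hstep4 : ∀ k ∈ Finset.range (m + n + 1),
      ∑ p ∈ Finset.HasAntidiagonal.antidiagonal k, F p ≤ (m + n).choose k * (m + n + k).choose k := by
    intro k _
    have : ∀ p ∈ Finset.HasAntidiagonal.antidiagonal k,
        F p ≤ (m.choose p.1 * n.choose p.2) * (m + n + k).choose k := by
      intro p hp
      rw [Finset.HasAntidiagonal.mem_antidiagonal] at hp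
      have h1 : (m + p.1).choose p.1 * (n + p.2).choose p.2 ≤ (m + n + k).choose k := by
        have := choose_mul_choose_le (m + p.1) (n + p.2) p.1 p.2
        have he : m + p.1 + (n + p.2) = m + n + k := by omega
        rw [he, hp] at this
        exact this
      calc F p = (m.choose p.1 * n.choose p.2) * ((m + p.1).choose p.1 * (n + p.2).choose p.2) := by
            rw [hF]; ring
        _ ≤ (m.choose p.1 * n.choose p.2) * (m + n + k).choose k := Nat.mul_le_mul_left _ h1
    calc ∑ p ∈ Finset.HasAntidiagonal.antidiagonal k, F p
        ≤ ∑ p ∈ Finset.HasAntidiagonal.antidiagonal k, (m.choose p.1 * n.choose p.2) * (m + n + k).choose k :=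
          Finset.sum_le_sum this
      _ = (∑ p ∈ Finset.HasAntidiagonal.antidiagonal k, m.choose p.1 * n.choose p.2) * (m + n + k).choose k :=
          (Finset.sum_mul _ _ _).symm
      _ = (m + n).choose k * (m + n + k).choose k := by rw [← Nat.add_choose_eq]
  calc DD m * DD n = ∑ p ∈ (Finset.range (m + 1)) ×ˢ (Finset.range (n + 1)), F p := hstep1
    _ ≤ ∑ p ∈ T, F p := hstep2
    _ = ∑ k ∈ Finset.range (m + n + 1), ∑ p ∈ Finset.HasAntidiagonal.antidiagonal k, F p := hstep3
    _ ≤ ∑ k ∈ Finset.range (m + n + 1), (m + n).choose k * (m + n + k).choose k :=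
        Finset.sum_le_sum hstep4
    _ = DD (m + n) := rfl

lemma R_le_DD (n : ℕ) : R n ≤ (DD n : ℚ) := by
  rw [R, DD]
  push_cast
  refine Finset.sum_le_sum fun k _ => ?_
  have hc : (0 : ℚ) ≤ (n.choose k : ℚ) * ((n + k).choose k : ℚ) := by positivity
  rcases Nat.eq_zero_or_pos k with hk | hk
  · subst hk; norm_num
  · have h1 : (1 : ℚ) ≤ 2 * (k : ℚ) - 1 := by
      have : (1 : ℚ) ≤ (k : ℚ) := by exact_mod_cast hk
      linarith
    have : 1 / (2 * (k : ℚ) - 1) ≤ 1 := by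
      rw [div_le_one (by linarith)]; linarith
    calc (n.choose k : ℚ) * ((n + k).choose k : ℚ) * (1 / (2 * (k : ℚ) - 1))
        ≤ (n.choose k : ℚ) * ((n + k).choose k : ℚ) * 1 := by
          exact mul_le_mul_of_nonneg_left this hc
      _ = (n.choose k : ℚ) * ((n + k).choose k : ℚ) := by ring

lemma DD_le_R (n : ℕ) : (DD n : ℚ) - 1 ≤ (2 * n + 1) * (R n + 1) := by
  have hR : R n + 1 = ∑ k ∈ Finset.range n,
      (n.choose (k+1) : ℚ) * ((n + (k+1)).choose (k+1) : ℚ) * (1 / (2 * ((k:ℚ)+1) - 1)) := by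
    rw [R, Finset.sum_range_succ']
    push_cast
    norm_num
  have hD : (DD n : ℚ) - 1 = ∑ k ∈ Finset.range n,
      (n.choose (k+1) : ℚ) * ((n + (k+1)).choose (k+1) : ℚ) := by
    rw [DD, Finset.sum_range_succ']
    push_cast
    norm_num
  rw [hR, hD, Finset.mul_sum]
  refine Finset.sum_le_sum fun k hk => ?_
  have hkn : (k : ℚ) + 1 ≤ (n : ℚ) := by
    have := Finset.mem_range.1 hk
    exact_mod_cast Nat.succ_le_of_lt this
  have hpos : (0 : ℚ) < 2 * ((k:ℚ)+1) - 1 := by linarith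
  have hc : (0 : ℚ) ≤ (n.choose (k+1) : ℚ) * ((n + (k+1)).choose (k+1) : ℚ) := by positivity
  rw [mul_comm ((2:ℚ) * n + 1)]
  rw [mul_assoc]
  refine le_mul_of_one_le_right hc ?_
  rw [one_div, inv_mul_eq_div, le_div_iff₀ hpos]
  linarith

lemma nat_ge5 (n : ℕ) (hn : 5 ≤ n) : 4 * n + 4 ≤ 2 ^ n := by
  induction n with
  | zero => omega
  | succ m ih =>
    rcases Nat.lt_or_ge m 5 with h | h
    · interval_cases m <;> omega
    · have h1 := ih (by omega)
      have h2 : 32 ≤ 2 ^ m := by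
        calc (32:ℕ) = 2 ^ 5 := by norm_num
          _ ≤ 2 ^ m := Nat.pow_le_pow_right (by norm_num) h
      have : 2 ^ (m + 1) = 2 ^ m + 2 ^ m := by ring
      omega

lemma DD_le_R' (n : ℕ) (hn : 5 ≤ n) : (DD n : ℚ) ≤ (4 * n + 2) * R n := by
  have h1 := DD_le_R n
  have h2 : (4 * (n:ℚ) + 4) ≤ (DD n : ℚ) := by
    have := le_trans (nat_ge5 n hn) (two_pow_le_DD n)
    exact_mod_cast this
  linarith

lemma R_pos (n : ℕ) (hn : 5 ≤ n) : 0 < R n := by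
  have h1 := DD_le_R' n hn
  have h2 : (0:ℚ) < (DD n : ℚ) := by exact_mod_cast DD_pos n
  nlinarith [h1, h2]

noncomputable def uu (n : ℕ) : ℝ := -Real.log (DD n)

lemma uu_subadd : Subadditive uu := by
  intro m n
  have hm : (0:ℝ) < (DD m : ℝ) := by exact_mod_cast DD_pos m
  have hn : (0:ℝ) < (DD n : ℝ) := by exact_mod_cast DD_pos n
  have key : Real.log (DD m) + Real.log (DD n) ≤ Real.log (DD (m+n)) := by
    rw [← Real.log_mul hm.ne' hn.ne']
    have hle : (DD m : ℝ) * (DD n : ℝ) ≤ (DD (m+n) : ℝ) := by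
      exact_mod_cast DD_supermul m n
    exact Real.log_le_log (by positivity) hle
  simp only [uu]
  linarith

lemma uu_bdd : BddBelow (Set.range fun n : ℕ => uu n / n) := by
  refine ⟨-Real.log 8, ?_⟩
  rintro x ⟨n, rfl⟩
  rcases Nat.eq_zero_or_pos n with hn | hn
  · subst hn
    have h0 : DD 0 = 1 := rfl
    simp [uu, h0]
    exact Real.log_nonneg (by norm_num)
  · have hnpos : (0:ℝ) < (n:ℝ) := by exact_mod_cast hn
    have hlog : Real.log (DD n) ≤ (n:ℝ) * Real.log 8 := by
      have h1 : (DD n : ℝ) ≤ (8:ℝ) ^ n := by exact_mod_cast DD_le n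
      have h2 : Real.log (DD n) ≤ Real.log ((8:ℝ) ^ n) := by
        have := DD_pos n
        exact Real.log_le_log (by exact_mod_cast this) h1
      rwa [Real.log_pow] at h2
    simp only [uu]
    rw [le_div_iff₀ hnpos]
    nlinarith

lemma tendsto_log_linear_div :
    Tendsto (fun n : ℕ => Real.log (4 * (n:ℝ) + 2) / (n:ℝ)) atTop (𝓝 0) := by
  have h2 : Tendsto (fun n : ℕ => 4 * (n:ℝ) + 2) atTop atTop := by
    apply Filter.tendsto_atTop_add_const_right
    exact (tendsto_natCast_atTop_atTop (R := ℝ)).const_mul_atTop (by norm_num)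
  have h3 : (fun n : ℕ => Real.log (4 * (n:ℝ) + 2)) =o[atTop]
      (fun n : ℕ => 4 * (n:ℝ) + 2) := by
    simpa [Function.comp_def] using Real.isLittleO_log_id_atTop.comp_tendsto h2
  have h4 : (fun n : ℕ => 4 * (n:ℝ) + 2) =O[atTop] (fun n : ℕ => (n:ℝ)) := by
    rw [Asymptotics.isBigO_iff]
    refine ⟨6, ?_⟩
    filter_upwards [eventually_ge_atTop 1] with n hn
    have h1 : (1:ℝ) ≤ (n:ℝ) := by exact_mod_cast hn
    rw [Real.norm_eq_abs, Real.norm_eq_abs, abs_of_nonneg (by linarith), abs_of_nonneg (by linarith)]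
    linarith
  exact (h3.trans_isBigO h4).tendsto_div_nhds_zero

lemma tendsto_logR : ∃ c : ℝ,
    Tendsto (fun n : ℕ => Real.log ((R n : ℝ)) / (n:ℝ)) atTop (𝓝 c) := by
  have hfek := uu_subadd.tendsto_lim uu_bdd
  have hD : Tendsto (fun n : ℕ => Real.log (DD n) / (n:ℝ)) atTop (𝓝 (-uu_subadd.lim)) := by
    have := hfek.neg
    simpa [uu, neg_div] using this
  refine ⟨-uu_subadd.lim, ?_⟩
  have hg : Tendsto (fun n : ℕ => Real.log (DD n) / (n:ℝ) - Real.log (4*(n:ℝ)+2) / (n:ℝ))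
      atTop (𝓝 (-uu_subadd.lim)) := by
    have := hD.sub tendsto_log_linear_div
    simpa using this
  refine tendsto_of_tendsto_of_tendsto_of_le_of_le' hg hD ?_ ?_
  · -- lower bound
    filter_upwards [eventually_ge_atTop 5] with n hn
    have hnpos : (0:ℝ) < (n:ℝ) := by
      have : (5:ℝ) ≤ (n:ℝ) := by exact_mod_cast hn
      linarith
    have hRpos : (0:ℝ) < ((R n : ℚ) : ℝ) := by exact_mod_cast R_pos n hn
    have hfrac : (0:ℝ) < 4*(n:ℝ)+2 := by linarith
    have hge : (DD n : ℝ) / (4*(n:ℝ)+2) ≤ ((R n : ℚ) : ℝ) := by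
      rw [div_le_iff₀ hfrac]
      have := DD_le_R' n hn
      have hcast : (DD n : ℝ) ≤ (4*(n:ℝ)+2) * ((R n : ℚ) : ℝ) := by
        exact_mod_cast this
      linarith [hcast]
    have hDpos : (0:ℝ) < (DD n : ℝ) := by exact_mod_cast DD_pos n
    have hlog : Real.log (DD n) - Real.log (4*(n:ℝ)+2) ≤ Real.log ((R n : ℚ) : ℝ) := by
      rw [← Real.log_div hDpos.ne' hfrac.ne']
      exact Real.log_le_log (by positivity) hge
    rw [div_sub_div_same]
    exact div_le_div_of_nonneg_right hlog hnpos.le |>.trans_eq rfl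
  · -- upper bound
    filter_upwards [eventually_ge_atTop 5] with n hn
    have hnpos : (0:ℝ) < (n:ℝ) := by
      have : (5:ℝ) ≤ (n:ℝ) := by exact_mod_cast hn
      linarith
    have hRpos : (0:ℝ) < ((R n : ℚ) : ℝ) := by exact_mod_cast R_pos n hn
    have hle : ((R n : ℚ) : ℝ) ≤ (DD n : ℝ) := by exact_mod_cast R_le_DD n
    have hlog : Real.log ((R n : ℚ) : ℝ) ≤ Real.log (DD n) :=
      Real.log_le_log hRpos hle
    exact div_le_div_of_nonneg_right hlog hnpos.le |>.trans_eq rfl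

theorem stmt_14 :
    Filter.Tendsto
      (fun n : ℕ => (R (n + 1) : ℝ) ^ (1 / ((n : ℝ) + 1)) / (R n : ℝ) ^ (1 / (n : ℝ)))
      Filter.atTop (nhds 1) := by
  obtain ⟨c, hc⟩ := tendsto_logR
  have hc1 : Tendsto (fun n : ℕ => Real.log ((R (n+1) : ℝ)) / ((n:ℝ)+1)) atTop (𝓝 c) := by
    have h := hc.comp (tendsto_add_atTop_nat 1)
    refine h.congr fun n => ?_
    simp [Function.comp]
  have hsub : Tendsto (fun n : ℕ =>
      Real.log ((R (n+1) : ℝ)) / ((n:ℝ)+1) - Real.log ((R n : ℝ)) / (n:ℝ)) atTop (𝓝 0) := by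
    simpa using hc1.sub hc
  have hexp : Tendsto (fun n : ℕ =>
      Real.exp (Real.log ((R (n+1) : ℝ)) / ((n:ℝ)+1) - Real.log ((R n : ℝ)) / (n:ℝ)))
      atTop (𝓝 1) := by
    have := (Real.continuous_exp.tendsto 0).comp hsub
    simpa [Function.comp_def] using this
  refine hexp.congr' ?_
  filter_upwards [eventually_ge_atTop 5] with n hn
  have hRn : (0:ℝ) < ((R n : ℚ) : ℝ) := by exact_mod_cast R_pos n hn
  have hRn1 : (0:ℝ) < ((R (n+1) : ℚ) : ℝ) := by exact_mod_cast R_pos (n+1) (by omega)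
  rw [Real.exp_sub]
  rw [Real.rpow_def_of_pos hRn1, Real.rpow_def_of_pos hRn]
  rw [mul_one_div, mul_one_div]
end
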